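/- Let φ ∈ {f,g,h}. If w ∈ Σ₃* is not rich, then φ(w)·0 is not rich. -/

import Mathlib

/-- The morphism `f` with f(0)=0, f(1)=01, f(2)=011. -/
def fm : List (Fin 3) → List (Fin 2) :=
  fun w => w.flatMap (fun a => if a = 0 then [0] else if a = 1 then [0,1] else [0,1,1])

/-- The morphism `g` with g(0)=011, g(1)=0121, g(2)=012121. -/
def gm : List (Fin 3) → List (Fin 3) :=
  fun w => w.flatMap (fun a => if a = 0 then [0,1,1] else if a = 1 then [0,1,2,1] else [0,1,2,1,2,1])

/-- The morphism `h` with h(0)=01, h(1)=02, h(2)=022. -/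
def hm : List (Fin 3) → List (Fin 3) :=
  fun w => w.flatMap (fun a => if a = 0 then [0,1] else if a = 1 then [0,2] else [0,2,2])

/-- A finite word of length n is rich if it contains exactly n distinct
nonempty palindromic factors. -/
def Rich {α : Type*} (w : List α) : Prop :=
  {p : List α | p ≠ [] ∧ p.reverse = p ∧ p <:+: w}.ncard = w.length

namespace NRI

variable {α : Type*}

/-- Nonempty palindromic factors of a word. -/
def PF (w : List α) : Set (List α) := {p | p ≠ [] ∧ p.reverse = p ∧ p <:+: w}

lemma pf_finite (w : List α) : (PF w).Finite := by
  apply (List.finite_toSet w.sublists).subset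
  intro p hp
  simpa [List.mem_sublists] using hp.2.2.sublist

lemma pf_mono {w w' : List α} (h : w <:+: w') : PF w ⊆ PF w' :=
  fun _ hp => ⟨hp.1, hp.2.1, hp.2.2.trans h⟩

/-- cancel a final letter -/
lemma concat_cancel {a b : List α} {x y : α} (h : a ++ [x] = b ++ [y]) : a = b ∧ x = y := by
  simpa using List.append_inj h (by have := congrArg List.length h; simpa using this)

/-- A factor of `v ++ [b]` which is not a factor of `v` is a suffix. -/
lemma infix_last {p v : List α} {b : α} (h : p <:+: v ++ [b]) (h2 : ¬ p <:+: v) :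
    p <:+ v ++ [b] := by
  obtain ⟨x, y, hxy⟩ := h
  rcases y.eq_nil_or_concat with rfl | ⟨y', c, rfl⟩
  · exact ⟨x, by simpa using hxy⟩
  · exfalso
    apply h2
    have hxy' : (x ++ p ++ y') ++ [c] = v ++ [b] := by
      simpa [List.concat_eq_append, List.append_assoc] using hxy
    exact ⟨x, y', (concat_cancel hxy').1⟩

/-- One letter adds at most one distinct palindromic factor. -/
lemma step_ncard (v : List α) (b : α) : (PF (v ++ [b])).ncard ≤ (PF v).ncard + 1 := by
  classical
  set S := PF (v ++ [b]) \ PF v with hS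
  have hsuf : ∀ p ∈ S, p <:+ v ++ [b] := by
    intro p hp
    exact infix_last hp.1.2.2 fun hc => hp.2 ⟨hp.1.1, hp.1.2.1, hc⟩
  have hkey : ∀ p ∈ S, ∀ q ∈ S, p <:+ q → p = q := by
    intro p hp q hq hpq
    by_contra hne
    have hpre : p <+: q := by
      have := hpq.reverse
      rwa [hp.1.2.1, hq.1.2.1] at this
    obtain ⟨m, hm⟩ := hpre
    obtain ⟨z0, hz0⟩ := hsuf q hq
    rcases m.eq_nil_or_concat with rfl | ⟨m', c, rfl⟩
    · exact hne (by simpa using hm)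
    · apply hp.2
      refine ⟨hp.1.1, hp.1.2.1, ⟨z0, m', ?_⟩⟩
      have hz0' : (z0 ++ p ++ m') ++ [c] = v ++ [b] := by
        rw [← hm] at hz0
        simpa [List.concat_eq_append, List.append_assoc] using hz0
      exact (concat_cancel hz0').1
  have hss : S.Subsingleton := by
    intro p hp q hq
    rcases List.suffix_or_suffix_of_suffix (hsuf p hp) (hsuf q hq) with h | h
    · exact hkey p hp q hq h
    · exact (hkey q hq p hp h).symm
  have hsub : PF (v ++ [b]) ⊆ PF v ∪ S := by
    intro p hp
    by_cases h : p ∈ PF v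
    · exact Or.inl h
    · exact Or.inr ⟨hp, h⟩
  have hfin : (PF v ∪ S).Finite :=
    (pf_finite v).union ((pf_finite (v ++ [b])).subset Set.diff_subset)
  calc (PF (v ++ [b])).ncard ≤ (PF v ∪ S).ncard := Set.ncard_le_ncard hsub hfin
    _ ≤ (PF v).ncard + S.ncard := Set.ncard_union_le _ _
    _ ≤ (PF v).ncard + 1 := by
        rcases hss.eq_empty_or_singleton with h | ⟨x, h⟩ <;> simp [h]

lemma pf_nil : PF (α := α) [] = ∅ := by
  ext p
  simp only [PF, Set.mem_setOf_eq, Set.mem_empty_iff_false, iff_false, not_and]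
  intro hne _ hinf
  exact hne (List.eq_nil_of_infix_nil hinf)

lemma ncard_le_length (v : List α) : (PF v).ncard ≤ v.length := by
  induction v using List.reverseRecOn with
  | nil => simp [pf_nil]
  | append_singleton v b ih =>
      have := step_ncard v b
      simp only [List.length_append, List.length_singleton]
      omega

lemma ncard_append_le (v t : List α) : (PF (v ++ t)).ncard ≤ (PF v).ncard + t.length := by
  induction t using List.reverseRecOn with
  | nil => simp
  | append_singleton t c ih =>
      have h := step_ncard (v ++ t) c
      rw [← List.append_assoc]
      simp only [List.length_append, List.length_singleton]
      omega

/-- In a rich word, every letter adds a new palindromic factor. -/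
lemma rich_step {x v t : List α} {b : α} (hr : Rich x) (hx : x = v ++ [b] ++ t) :
    ¬ (PF (v ++ [b]) ⊆ PF v) := by
  intro hsub
  have h1 : PF (v ++ [b]) = PF v :=
    Set.Subset.antisymm hsub (pf_mono ⟨[], [b], by simp⟩)
  have hr' : (PF x).ncard = x.length := hr
  have h2 := ncard_append_le (v ++ [b]) t
  rw [← hx] at h2
  rw [h1] at h2
  have h3 := ncard_le_length v
  have h4 : x.length = v.length + 1 + t.length := by rw [hx]; simp; omega
  omega

/-- If every letter adds a new palindromic factor, the word is rich. -/
lemma rich_of_steps (w : List α)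
    (H : ∀ u a t, w = u ++ [a] ++ t → ∃ s, s ∈ PF (u ++ [a]) ∧ s ∉ PF u) :
    Rich w := by
  have key : ∀ v : List α,
      (∀ u a t, v = u ++ [a] ++ t → ∃ s, s ∈ PF (u ++ [a]) ∧ s ∉ PF u) →
      v.length ≤ (PF v).ncard := by
    intro v
    induction v using List.reverseRecOn with
    | nil => intro _; simp
    | append_singleton u a ih =>
        intro H'
        obtain ⟨s, hs1, hs2⟩ := H' u a [] (by simp)
        have hsub : PF u ⊂ PF (u ++ [a]) := by
          constructor
          · exact pf_mono ⟨[], [a], by simp⟩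
          · intro hc; exact hs2 (hc hs1)
        have hlt : (PF u).ncard < (PF (u ++ [a])).ncard :=
          Set.ncard_lt_ncard hsub (pf_finite _)
        have hle := ih (fun u' a' t' ht => H' u' a' (t' ++ [a]) (by rw [ht]; simp))
        simp only [List.length_append, List.length_singleton]
        omega
  exact le_antisymm (ncard_le_length w) (key w H)

section Morphism

variable {β : Type*} (φ : Fin 3 → List β) (z : β)

/-- Apply a letter-to-word morphism. -/
def Phi (w : List (Fin 3)) : List β := w.flatMap φ

lemma phi_append (x y : List (Fin 3)) : Phi φ (x ++ y) = Phi φ x ++ Phi φ y :=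
  List.flatMap_append

lemma phi_cons (a : Fin 3) (u : List (Fin 3)) : Phi φ (a :: u) = φ a ++ Phi φ u := by
  simp [Phi]

lemma block_cons (h1 : ∀ a, (φ a).head? = some z) (a : Fin 3) : ∃ r, φ a = z :: r := by
  have h := h1 a
  cases hb : φ a with
  | nil => rw [hb] at h; simp at h
  | cons x xs => rw [hb] at h; simp at h; exact ⟨xs, by rw [h]⟩

lemma phi_ne_head (h1 : ∀ a, (φ a).head? = some z) {u : List (Fin 3)} (hu : u ≠ []) :
    ∃ r, Phi φ u = z :: r := by
  cases u with
  | nil => exact absurd rfl hu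
  | cons a u' =>
      obtain ⟨r, hr⟩ := block_cons φ z h1 a
      exact ⟨r ++ Phi φ u', by rw [phi_cons, hr]; simp⟩

lemma phi_z_head (h1 : ∀ a, (φ a).head? = some z) (u : List (Fin 3)) :
    ∃ r, Phi φ u ++ [z] = z :: r := by
  cases u with
  | nil => exact ⟨[], by simp [Phi]⟩
  | cons a u' =>
      obtain ⟨r, hr⟩ := phi_ne_head φ z h1 (u := a :: u') (by simp)
      exact ⟨r ++ [z], by rw [hr]; simp⟩

lemma block_pal (h2 : ∀ a, (φ a ++ [z]).reverse = φ a ++ [z]) (a : Fin 3) :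
    z :: (φ a).reverse = φ a ++ [z] := by
  have h := h2 a
  rwa [List.reverse_append, List.reverse_singleton, List.singleton_append] at h

lemma rev_phi (h2 : ∀ a, (φ a ++ [z]).reverse = φ a ++ [z]) (u : List (Fin 3)) :
    (Phi φ u ++ [z]).reverse = Phi φ u.reverse ++ [z] := by
  induction u with
  | nil => simp [Phi]
  | cons a u' ih =>
      rw [phi_cons, List.append_assoc, List.reverse_append, ih, List.reverse_cons,
        phi_append, List.append_assoc, List.append_assoc]
      congr 1
      simpa [Phi] using block_pal φ z h2 a

lemma phi_inj (h1 : ∀ a, (φ a).head? = some z)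
    (h3 : ∀ a t, t <:+ φ a → t.head? = some z → t = φ a)
    (h5 : Function.Injective φ) :
    ∀ s t : List (Fin 3), Phi φ s = Phi φ t → s = t := by
  intro s
  induction s with
  | nil =>
      intro t h
      cases t with
      | nil => rfl
      | cons b t' =>
          exfalso
          obtain ⟨r, hr⟩ := phi_ne_head φ z h1 (u := b :: t') (by simp)
          rw [← h] at hr
          simp [Phi] at hr
  | cons a s' ih =>
      intro t h
      cases t with
      | nil =>
          exfalso
          obtain ⟨r, hr⟩ := phi_ne_head φ z h1 (u := a :: s') (by simp)
          rw [h] at hr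
          simp [Phi] at hr
      | cons b t' =>
          rw [phi_cons, phi_cons] at h
          have hab : a = b := by
            have hpp : φ a <+: φ b ∨ φ b <+: φ a :=
              List.prefix_or_prefix_of_prefix ⟨Phi φ s', h⟩ ⟨Phi φ t', rfl⟩
            have main : ∀ (a b : Fin 3) (s' t' : List (Fin 3)),
                φ a ++ Phi φ s' = φ b ++ Phi φ t' → φ a <+: φ b → a = b := by
              intro a b s' t' h hpre
              obtain ⟨m, hm⟩ := hpre
              rcases m.eq_nil_or_concat with rfl | ⟨m0, c0, hm0⟩
              · exact h5 (by simpa using hm)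
              · exfalso
                have hmne : m ≠ [] := by rw [hm0]; simp
                have heq : Phi φ s' = m ++ Phi φ t' := by
                  rw [← hm, List.append_assoc] at h
                  exact List.append_cancel_left h
                have hs'ne : s' ≠ [] := by
                  rintro rfl
                  rw [show Phi φ ([] : List (Fin 3)) = [] from rfl] at heq
                  exact hmne (List.append_eq_nil_iff.mp heq.symm).1
                obtain ⟨r, hr⟩ := phi_ne_head φ z h1 hs'ne
                have hmh : m.head? = some z := by
                  rw [hr] at heq
                  cases m with
                  | nil => exact absurd rfl hmne
                  | cons x xs =>
                      simp only [List.cons_append, List.cons.injEq] at heq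
                      simp [heq.1]
                have hfull := h3 b m ⟨φ a, hm⟩ hmh
                rw [hfull] at hm
                have hl := congrArg List.length hm
                obtain ⟨r0, hr0⟩ := block_cons φ z h1 a
                rw [hr0] at hl
                simp at hl
                omega
            rcases hpp with hp | hp
            · exact main a b s' t' h hp
            · exact (main b a t' s' h.symm hp).symm
          subst hab
          rw [ih t' (List.append_cancel_left h)]

lemma phi_struct (h3 : ∀ a t, t <:+ φ a → t.head? = some z → t = φ a) :
    ∀ u q, q <:+ Phi φ u ++ [z] → q.head? = some z →
    ∃ s, s <:+ u ∧ q = Phi φ s ++ [z] := by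
  intro u
  induction u with
  | nil =>
      intro q hq hh
      refine ⟨[], List.suffix_rfl, ?_⟩
      obtain ⟨x, hx⟩ := hq
      simp [Phi] at hx ⊢
      cases x with
      | nil => simpa using hx
      | cons d x' =>
          exfalso
          simp only [List.cons_append, List.cons.injEq] at hx
          obtain ⟨-, h0⟩ := hx
          rw [(List.append_eq_nil_iff.mp h0).2] at hh
          simp at hh
  | cons a u' ih =>
      intro q hq hh
      rw [phi_cons, List.append_assoc] at hq
      obtain ⟨x, hx⟩ := hq
      rw [List.append_eq_append_iff] at hx
      rcases hx with ⟨a', ha1, ha2⟩ | ⟨c', hc1, hc2⟩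
      · rcases List.eq_nil_or_concat a' with rfl | hne
        · obtain ⟨s, hs1, hs2⟩ := ih q (by rw [ha2]; simp) hh
          exact ⟨s, hs1.trans (List.suffix_cons a u'), hs2⟩
        · have ha'ne : a' ≠ [] := by rcases hne with ⟨l, b0, rfl⟩; simp
          have hh' : a'.head? = some z := by
            rw [ha2] at hh
            cases a' with
            | nil => exact absurd rfl ha'ne
            | cons x xs => simpa using hh
          have hfull := h3 a a' ⟨x, ha1.symm⟩ hh'
          refine ⟨a :: u', List.suffix_rfl, ?_⟩
          rw [ha2, hfull, phi_cons, List.append_assoc]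
      · obtain ⟨s, hs1, hs2⟩ := ih q ⟨c', hc2.symm⟩ hh
        exact ⟨s, hs1.trans (List.suffix_cons a u'), hs2⟩

lemma phi_embed (h1 : ∀ a, (φ a).head? = some z) {s u' : List (Fin 3)} (a : Fin 3)
    (hs : s <:+: u') : Phi φ s ++ [z] <:+: Phi φ (u' ++ [a]) := by
  obtain ⟨x, y, hxy⟩ := hs
  obtain ⟨r, hr⟩ := phi_ne_head φ z h1 (u := y ++ [a]) (by simp)
  refine ⟨Phi φ x, r, ?_⟩
  rw [← hxy]
  rw [show x ++ s ++ y ++ [a] = x ++ (s ++ (y ++ [a])) by simp [List.append_assoc]]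
  rw [phi_append, phi_append, hr]
  simp [List.append_assoc]

/-- The key lemma: richness of the image forces richness of the preimage. -/
lemma rich_of_image (h1 : ∀ a, (φ a).head? = some z)
    (h2 : ∀ a, (φ a ++ [z]).reverse = φ a ++ [z])
    (h3 : ∀ a t, t <:+ φ a → t.head? = some z → t = φ a)
    (h5 : Function.Injective φ)
    (w : List (Fin 3)) (hr : Rich (Phi φ w ++ [z])) : Rich w := by
  apply rich_of_steps
  intro u' a t hw
  obtain ⟨r, hrr⟩ := phi_z_head φ z h1 t
  have himg : Phi φ w ++ [z] = Phi φ (u' ++ [a]) ++ [z] ++ r := by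
    rw [hw, phi_append, List.append_assoc, List.append_assoc, hrr]
    simp [List.append_assoc]
  have hne := rich_step hr himg
  obtain ⟨q, hq, hqn⟩ := Set.not_subset.mp hne
  have hqsuf : q <:+ Phi φ (u' ++ [a]) ++ [z] :=
    infix_last hq.2.2 fun hc => hqn ⟨hq.1, hq.2.1, hc⟩
  obtain ⟨q0, c0, hq0⟩ : ∃ q0 c0, q = q0 ++ [c0] := by
    rcases q.eq_nil_or_concat with rfl | ⟨q0, c0, hc⟩
    · exact absurd rfl hq.1
    · exact ⟨q0, c0, by simpa [List.concat_eq_append] using hc⟩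
  have hc0 : c0 = z := by
    obtain ⟨x, hx⟩ := hqsuf
    rw [hq0, ← List.append_assoc] at hx
    exact (concat_cancel hx).2
  rw [hc0] at hq0
  clear hc0
  have hqhead : q.head? = some z := by
    conv_lhs => rw [← hq.2.1, hq0]
    simp
  obtain ⟨s, hsu, hqs⟩ := phi_struct φ z h3 (u' ++ [a]) q hqsuf hqhead
  have hspal : s.reverse = s := by
    apply phi_inj φ z h1 h3 h5
    have hthis : (Phi φ s ++ [z]).reverse = Phi φ s ++ [z] := by rw [← hqs, hq.2.1]
    rw [rev_phi φ z h2 s] at hthis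
    exact List.append_cancel_right hthis
  have hsne : s ≠ [] := by
    rintro rfl
    apply hqn
    refine ⟨hq.1, hq.2.1, ?_⟩
    obtain ⟨r', hr'⟩ := phi_ne_head φ z h1 (u := u' ++ [a]) (by simp)
    exact ⟨[], r', by rw [hqs, hr']; rfl⟩
  refine ⟨s, ⟨hsne, hspal, hsu.isInfix⟩, ?_⟩
  intro hs'
  exact hqn ⟨hq.1, hq.2.1, hqs ▸ phi_embed φ z h1 a hs'.2.2⟩

end Morphism

end NRI

def phif : Fin 3 → List (Fin 2) :=
  fun a => if a = 0 then [0] else if a = 1 then [0,1] else [0,1,1]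
def phig : Fin 3 → List (Fin 3) :=
  fun a => if a = 0 then [0,1,1] else if a = 1 then [0,1,2,1] else [0,1,2,1,2,1]
def phih : Fin 3 → List (Fin 3) :=
  fun a => if a = 0 then [0,1] else if a = 1 then [0,2] else [0,2,2]

lemma hf3 : ∀ (a : Fin 3) (t : List (Fin 2)), t <:+ phif a → t.head? = some 0 → t = phif a := by
  intro a t ht hh
  rw [← List.mem_tails] at ht
  fin_cases a <;> simp [phif] at ht ⊢ <;> aesop

lemma hg3 : ∀ (a : Fin 3) (t : List (Fin 3)), t <:+ phig a → t.head? = some 0 → t = phig a := by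
  intro a t ht hh
  rw [← List.mem_tails] at ht
  fin_cases a <;> simp [phig] at ht ⊢ <;> aesop

lemma hh3 : ∀ (a : Fin 3) (t : List (Fin 3)), t <:+ phih a → t.head? = some 0 → t = phih a := by
  intro a t ht hh
  rw [← List.mem_tails] at ht
  fin_cases a <;> simp [phih] at ht ⊢ <;> aesop

/-- For φ ∈ {f,g,h}: if w is not rich, then φ(w)·0 is not rich. -/
theorem non_rich_image (w : List (Fin 3)) (hw : ¬ Rich w) :
    ¬ Rich (fm w ++ [0]) ∧ ¬ Rich (gm w ++ [0]) ∧ ¬ Rich (hm w ++ [0]) := by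
  refine ⟨fun hr => hw ?_, fun hr => hw ?_, fun hr => hw ?_⟩
  · exact NRI.rich_of_image phif 0 (by decide) (by decide) hf3 (by decide) w hr
  · exact NRI.rich_of_image phig 0 (by decide) (by decide) hg3 (by decide) w hr
  · exact NRI.rich_of_image phih 0 (by decide) (by decide) hh3 (by decide) w hr
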